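/- When the network is a path 1–2–...–n, in any sequence of rational swaps under strict preferences, each object moves in only one direction: if object o_i starts at agent i in σ_0 and ends at agent j in σ_t, then exactly |j - i| swaps involve o_i, and in all of them o_i moves rightward if i < j and leftward if i > j. -/

import Mathlib

/-- An assignment maps agents to objects bijectively (agents and objects are both `Fin n`;
object `o_i` is identified with index `i`, agent `i` initially holds `o_i`). -/
abbrev Assignment (n : ℕ) := Equiv.Perm (Fin n)

/-- `u j o` is agent `j`'s utility for object `o`; strict linear preferences mean each `u j`
is injective, and `o ≻_j o'` iff `u j o > u j o'`. -/
def StrictPref {n : ℕ} (u : Fin n → Fin n → ℕ) : Prop := ∀ j, Function.Injective (u j)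

/-- A rational swap under strict preferences: two adjacent agents exchange objects, each
strictly preferring the object received. -/
def SwapStep {n : ℕ} (adj : Fin n → Fin n → Prop) (u : Fin n → Fin n → ℕ)
    (σ σ' : Assignment n) : Prop :=
  ∃ a b : Fin n, adj a b ∧ u a (σ b) > u a (σ a) ∧ u b (σ a) > u b (σ b) ∧
    σ' = σ * Equiv.swap a b

/-- `σseq 0, σseq 1, …, σseq t` is a sequence of swaps. -/
def SwapSeq {n : ℕ} (adj : Fin n → Fin n → Prop) (u : Fin n → Fin n → ℕ)
    (σseq : ℕ → Assignment n) (t : ℕ) : Prop :=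
  ∀ m < t, SwapStep adj u (σseq m) (σseq (m + 1))

/-- Adjacency of the path `0 – 1 – ⋯ – (n-1)`. -/
def pathAdj {n : ℕ} (i j : Fin n) : Prop := i.val + 1 = j.val ∨ j.val + 1 = i.val

section Aux

variable {n : ℕ} {u : Fin n → Fin n → ℕ} {t : ℕ} {σseq : ℕ → Assignment n} {i : Fin n}

private lemma step_data (hseq : SwapSeq pathAdj u σseq t) {m : ℕ} (hm : m < t) :
    ∃ a b : Fin n, pathAdj a b ∧ u a (σseq m b) > u a (σseq m a) ∧
      u b (σseq m a) > u b (σseq m b) ∧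
      (∀ x, σseq (m+1) x = σseq m (Equiv.swap a b x)) ∧
      (∀ y, (σseq (m+1))⁻¹ y = Equiv.swap a b ((σseq m)⁻¹ y)) := by
  obtain ⟨a, b, hadj, h1, h2, hprod⟩ := hseq m hm
  refine ⟨a, b, hadj, h1, h2, fun x => by rw [hprod]; rfl, fun y => ?_⟩
  rw [hprod, mul_inv_rev, Equiv.swap_inv]
  rfl

private lemma util_mono_step (hseq : SwapSeq pathAdj u σseq t) {m : ℕ} (hm : m < t)
    (q : Fin n) : u q (σseq m q) ≤ u q (σseq (m+1) q) := by
  obtain ⟨a, b, _, h1, h2, hfw, _⟩ := step_data hseq hm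
  rcases eq_or_ne q a with rfl | hqa
  · rw [hfw, Equiv.swap_apply_left]; exact le_of_lt h1
  rcases eq_or_ne q b with rfl | hqb
  · rw [hfw, Equiv.swap_apply_right]; exact le_of_lt h2
  · rw [hfw, Equiv.swap_apply_of_ne_of_ne hqa hqb]

private lemma util_mono (hseq : SwapSeq pathAdj u σseq t) (q : Fin n) {m m' : ℕ}
    (h : m ≤ m') (h' : m' ≤ t) : u q (σseq m q) ≤ u q (σseq m' q) := by
  induction m', h using Nat.le_induction with
  | base => exact le_refl _
  | succ m' hm ih =>
      exact le_trans (ih (by omega)) (util_mono_step hseq (by omega) q)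

private lemma move_strict (hseq : SwapSeq pathAdj u σseq t) {m : ℕ} (hm : m < t)
    (hmove : (σseq (m+1))⁻¹ i ≠ (σseq m)⁻¹ i) :
    pathAdj ((σseq m)⁻¹ i) ((σseq (m+1))⁻¹ i) ∧
    u ((σseq m)⁻¹ i) (σseq (m+1) ((σseq m)⁻¹ i)) > u ((σseq m)⁻¹ i) i ∧
    u ((σseq (m+1))⁻¹ i) i > u ((σseq (m+1))⁻¹ i) (σseq m ((σseq (m+1))⁻¹ i)) := by
  obtain ⟨a, b, hadj, h1, h2, hfw, hbw⟩ := step_data hseq hm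
  have hp' : (σseq (m+1))⁻¹ i = Equiv.swap a b ((σseq m)⁻¹ i) := hbw i
  have hpi : σseq m ((σseq m)⁻¹ i) = i := Equiv.apply_symm_apply _ _
  rcases eq_or_ne ((σseq m)⁻¹ i) a with ha | ha
  · have hb : (σseq (m+1))⁻¹ i = b := by rw [hp', ha, Equiv.swap_apply_left]
    refine ⟨by rw [ha, hb]; exact hadj, ?_, ?_⟩
    · rw [hfw, ha, Equiv.swap_apply_left]
      have : u a (σseq m a) = u a i := by rw [← ha, hpi]
      omega
    · rw [hb]
      have : u b (σseq m a) = u b i := by rw [← ha, hpi]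
      omega
  rcases eq_or_ne ((σseq m)⁻¹ i) b with hb | hb
  · have ha' : (σseq (m+1))⁻¹ i = a := by rw [hp', hb, Equiv.swap_apply_right]
    refine ⟨by rw [hb, ha']; exact Or.symm hadj, ?_, ?_⟩
    · rw [hfw, hb, Equiv.swap_apply_right]
      have : u b (σseq m b) = u b i := by rw [← hb, hpi]
      omega
    · rw [ha']
      have : u a (σseq m b) = u a i := by rw [← hb, hpi]
      omega
  · exact absurd (by rw [hp', Equiv.swap_apply_of_ne_of_ne ha hb]) hmove

/-- An object never returns to an agent it left. -/
private lemma no_return (hseq : SwapSeq pathAdj u σseq t) {m1 m2 : ℕ}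
    (h12 : m1 < m2) (h2t : m2 < t)
    (hm1 : (σseq (m1+1))⁻¹ i ≠ (σseq m1)⁻¹ i)
    (heq : (σseq (m2+1))⁻¹ i = (σseq m1)⁻¹ i)
    (hne : (σseq m2)⁻¹ i ≠ (σseq m1)⁻¹ i) : False := by
  have h1 := (move_strict hseq (lt_trans h12 h2t) hm1).2.1
  have hmv2 : (σseq (m2+1))⁻¹ i ≠ (σseq m2)⁻¹ i := by rw [heq]; exact fun h => hne h.symm
  have h2 := (move_strict hseq h2t hmv2).2.2
  rw [heq] at h2
  have h3 : u ((σseq m1)⁻¹ i) (σseq (m1+1) ((σseq m1)⁻¹ i))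
      ≤ u ((σseq m1)⁻¹ i) (σseq m2 ((σseq m1)⁻¹ i)) :=
    util_mono hseq ((σseq m1)⁻¹ i) (by omega) (by omega)
  omega

end Aux

/-- on a path with the identity initial endowment, if object `o_i` ends at agent
`j`, then exactly `|j - i|` swaps involve `o_i` (a swap involves `o_i` exactly when the position
of `o_i` changes), and in all of them `o_i` moves rightward if `i < j` and leftward if `i > j`. -/
theorem object_moves_one_direction {n : ℕ}
    (u : Fin n → Fin n → ℕ) (hu : StrictPref u)
    (t : ℕ) (σseq : ℕ → Assignment n) (h0 : σseq 0 = 1)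
    (hseq : SwapSeq pathAdj u σseq t)
    (i j : Fin n) (hend : (σseq t)⁻¹ i = j) :
    -- `pos m` is the agent holding object `o_i` after `m` swaps
    let pos : ℕ → ℕ := fun m => (((σseq m)⁻¹) i).val
    ((Finset.range t).filter (fun m => pos (m + 1) ≠ pos m)).card
        = (if i.val ≤ j.val then j.val - i.val else i.val - j.val) ∧
    (i.val < j.val → ∀ m < t, pos (m + 1) = pos m ∨ pos (m + 1) = pos m + 1) ∧
    (j.val < i.val → ∀ m < t, pos (m + 1) = pos m ∨ pos (m + 1) + 1 = pos m) := by
  intro pos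
  have hposdef : ∀ m, pos m = ((σseq m)⁻¹ i).val := fun m => rfl
  -- step cases: each step the position moves by 0 or ±1
  have hsc : ∀ m < t, pos (m+1) = pos m ∨ pos (m+1) = pos m + 1 ∨ pos (m+1) + 1 = pos m := by
    intro m hm
    by_cases h : (σseq (m+1))⁻¹ i = (σseq m)⁻¹ i
    · left; rw [hposdef, hposdef, h]
    · have hadj := (move_strict hseq hm h).1
      rcases hadj with h' | h'
      · right; left; rw [hposdef, hposdef]; omega
      · right; right; rw [hposdef, hposdef]; omega
  -- no two moves in opposite directions
  have opp : ∀ d m1 m2, m2 - m1 ≤ d → m1 < m2 → m2 < t →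
      ¬((pos (m1+1) = pos m1 + 1 ∧ pos (m2+1) + 1 = pos m2) ∨
        (pos (m1+1) + 1 = pos m1 ∧ pos (m2+1) = pos m2 + 1)) := by
    intro d
    induction d with
    | zero => intro m1 m2 hd h12 _ _; omega
    | succ d ih =>
      intro m1 m2 hd h12 h2t hcase
      by_cases hmid : ∃ m', m1 < m' ∧ m' < m2 ∧ pos (m'+1) ≠ pos m'
      · obtain ⟨m', hm1', hm2', hmv⟩ := hmid
        rcases hsc m' (by omega) with h | h | h
        · exact hmv h
        · rcases hcase with ⟨hR1, hL2⟩ | ⟨hL1, _⟩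
          · exact ih m' m2 (by omega) hm2' h2t (Or.inl ⟨h, hL2⟩)
          · exact ih m1 m' (by omega) hm1' (by omega) (Or.inr ⟨hL1, h⟩)
        · rcases hcase with ⟨hR1, _⟩ | ⟨_, hR2⟩
          · exact ih m1 m' (by omega) hm1' (by omega) (Or.inl ⟨hR1, h⟩)
          · exact ih m' m2 (by omega) hm2' h2t (Or.inr ⟨h, hR2⟩)
      · push_neg at hmid
        have hconst : ∀ k, m1 + 1 ≤ k → k ≤ m2 → pos k = pos (m1+1) := by
          intro k hk
          induction k, hk using Nat.le_induction with
          | base => intro _; rfl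
          | succ k hk ihk =>
            intro hk2
            rw [hmid k (by omega) (by omega), ihk (by omega)]
        have hpm2 : pos m2 = pos (m1+1) := hconst m2 (by omega) le_rfl
        have key1 : pos (m2+1) = pos m1 := by omega
        have key2 : pos (m1+1) ≠ pos m1 := by omega
        have key3 : pos m2 ≠ pos m1 := by omega
        refine no_return (i := i) hseq h12 h2t ?_ ?_ ?_
        · intro h; exact key2 (by rw [hposdef, hposdef, h])
        · exact Fin.ext (by rw [← hposdef, ← hposdef]; exact key1)
        · intro h; exact key3 (by rw [hposdef, hposdef, h])
  -- counting lemmas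
  have countR : (∀ m < t, pos (m+1) = pos m ∨ pos (m+1) = pos m + 1) →
      ∀ k ≤ t, pos k = pos 0 +
        ((Finset.range k).filter (fun m => pos (m + 1) ≠ pos m)).card := by
    intro hall k
    induction k with
    | zero => intro _; simp
    | succ k ihk =>
      intro hk
      rw [Finset.range_add_one, Finset.filter_insert]
      have h1 := ihk (by omega)
      by_cases hm : pos (k+1) ≠ pos k
      · rw [if_pos hm, Finset.card_insert_of_notMem (by simp)]
        have h2 := hall k (by omega)
        omega
      · rw [if_neg hm]
        push_neg at hm
        omega
  have countL : (∀ m < t, pos (m+1) = pos m ∨ pos (m+1) + 1 = pos m) →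
      ∀ k ≤ t, pos 0 = pos k +
        ((Finset.range k).filter (fun m => pos (m + 1) ≠ pos m)).card := by
    intro hall k
    induction k with
    | zero => intro _; simp
    | succ k ihk =>
      intro hk
      rw [Finset.range_add_one, Finset.filter_insert]
      have h1 := ihk (by omega)
      by_cases hm : pos (k+1) ≠ pos k
      · rw [if_pos hm, Finset.card_insert_of_notMem (by simp)]
        have h2 := hall k (by omega)
        omega
      · rw [if_neg hm]
        push_neg at hm
        omega
  have hpos0 : pos 0 = i.val := by rw [hposdef, h0]; simp
  have hpost : pos t = j.val := by rw [hposdef, hend]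
  by_cases hR : ∃ m, m < t ∧ pos (m+1) = pos m + 1
  · -- there is a rightward move, so there can be no leftward move
    obtain ⟨m1, hm1t, hm1⟩ := hR
    have hallR : ∀ m < t, pos (m+1) = pos m ∨ pos (m+1) = pos m + 1 := by
      intro m hm
      rcases hsc m hm with h | h | h
      · exact Or.inl h
      · exact Or.inr h
      · exfalso
        rcases lt_trichotomy m1 m with hlt | heq | hgt
        · exact opp (m - m1) m1 m le_rfl hlt hm (Or.inl ⟨hm1, h⟩)
        · subst heq; omega
        · exact opp (m1 - m) m m1 le_rfl hgt hm1t (Or.inr ⟨h, hm1⟩)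
    have hc := countR hallR t le_rfl
    refine ⟨by rw [if_pos (by omega)]; omega, fun _ => hallR, fun hj => absurd hj (by omega)⟩
  · push_neg at hR
    have hallL : ∀ m < t, pos (m+1) = pos m ∨ pos (m+1) + 1 = pos m := by
      intro m hm
      rcases hsc m hm with h | h | h
      · exact Or.inl h
      · exact absurd h (hR m hm)
      · exact Or.inr h
    have hc := countL hallL t le_rfl
    refine ⟨?_, fun hij => absurd hij (by omega), fun _ => hallL⟩
    by_cases hij : i.val ≤ j.val
    · rw [if_pos hij]; omega
    · rw [if_neg hij]; omega
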